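/- For two finite atomic measures supported on a common finite set of points, the Piccoli–Rossi minimization with atomic competitors reduces to: minimize a·Σ_i(m^S_i + m^D_i) + Σ_{j,k}(b·c_{jk} − 2a)·γ_{jk} over γ ∈ [0,∞)^{N×N} with Σ_k γ_{jk} ≤ m^S_j and Σ_j γ_{jk} ≤ m^D_k; i.e., the value of the original formulation (with remaining masses m̊^S ≤ m^S, m̊^D ≤ m^D and exact marginal constraints on γ) equals the value of this reduced inequality-constrained linear program. -/

import Mathlib

lemma PR_value_eq (N : ℕ) (c : Fin N → Fin N → ℝ) (mS mD : Fin N → ℝ)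
    (a b : ℝ) (γ : Fin N → Fin N → ℝ) :
    a * ∑ i, (mS i - ∑ k, γ i k) + a * ∑ i, (mD i - ∑ j, γ j i)
      + b * ∑ j, ∑ k, c j k * γ j k
    = a * ∑ i, (mS i + mD i)
      + ∑ j, ∑ k, (b * c j k - 2 * a) * γ j k := by
  have h1 : ∀ f : Fin N → ℝ, True := fun _ => trivial
  simp only [Finset.sum_sub_distrib, Finset.sum_add_distrib, sub_mul,
    Finset.mul_sum]
  rw [Finset.sum_comm (f := fun j i => γ j i)]
  ring_nf
  simp only [← Finset.sum_mul, ← Finset.mul_sum]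
  rw [Finset.sum_comm (f := fun i j => γ i j)]
  ring

/-- For two finite atomic measures on a common finite set of points, the
Piccoli–Rossi minimization over remaining masses `rS ≤ mS`, `rD ≤ mD` and exact
marginal constraints equals the reduced inequality-constrained linear program
minimizing `a·Σ(mS+mD) + Σ (b·c − 2a)·γ`. -/
theorem PR_discrete_reduction (N : ℕ) (x : Fin N → ℝ) (p : ℝ) (hp : 1 ≤ p)
    (mS mD : Fin N → ℝ) (hS : ∀ i, 0 ≤ mS i) (hD : ∀ i, 0 ≤ mD i)
    (a b : ℝ) (ha : 0 < a) (hb : 0 < b) :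
    sInf {v : ℝ | ∃ (γ : Fin N → Fin N → ℝ) (rS rD : Fin N → ℝ),
        (∀ j k, 0 ≤ γ j k) ∧
        (∀ i, 0 ≤ rS i) ∧ (∀ i, rS i ≤ mS i) ∧
        (∀ i, 0 ≤ rD i) ∧ (∀ i, rD i ≤ mD i) ∧
        (∀ j, ∑ k, γ j k = rS j) ∧ (∀ k, ∑ j, γ j k = rD k) ∧
        v = a * ∑ i, (mS i - rS i) + a * ∑ i, (mD i - rD i)
            + b * ∑ j, ∑ k, |x j - x k| ^ p * γ j k}
      = sInf {v : ℝ | ∃ γ : Fin N → Fin N → ℝ,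
        (∀ j k, 0 ≤ γ j k) ∧
        (∀ j, ∑ k, γ j k ≤ mS j) ∧ (∀ k, ∑ j, γ j k ≤ mD k) ∧
        v = a * ∑ i, (mS i + mD i)
            + ∑ j, ∑ k, (b * |x j - x k| ^ p - 2 * a) * γ j k} := by
  congr 1
  ext v
  constructor
  · rintro ⟨γ, rS, rD, hγ, _, hrS, _, hrD, hS', hD', hv⟩
    refine ⟨γ, hγ, fun j => (hS' j) ▸ hrS j, fun k => (hD' k) ▸ hrD k, ?_⟩
    rw [hv]
    have := PR_value_eq N (fun j k => |x j - x k| ^ p) mS mD a b γ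
    simp only [← hS', ← hD'] at *
    exact this
  · rintro ⟨γ, hγ, hS', hD', hv⟩
    refine ⟨γ, fun j => ∑ k, γ j k, fun k => ∑ j, γ j k, hγ,
      fun i => Finset.sum_nonneg fun k _ => hγ i k, hS',
      fun i => Finset.sum_nonneg fun j _ => hγ j i, hD',
      fun _ => rfl, fun _ => rfl, ?_⟩
    rw [hv]
    exact (PR_value_eq N (fun j k => |x j - x k| ^ p) mS mD a b γ).symm
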